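/- (Strong law of large numbers for U-statistics of degree 2.) Let E be a measurable space, let (Ω, μ) be a probability space, let Z_i : Ω → E, i ∈ ℕ, be an i.i.d. sequence with common law ν, and let h : E × E → ℝ be a bounded measurable symmetric kernel (h(x,y) = h(y,x)). Define the U-statistic U_n = (2/(n(n−1))) · Σ_{1≤i<j≤n} h(Z_i, Z_j). Then U_n converges almost surely to θ = ∫∫ h d(ν ⊗ ν) as n → ∞. -/

import Mathlib

open MeasureTheory ProbabilityTheory Filter

set_option linter.unusedSectionVars false
set_option linter.unusedVariables false
set_option maxHeartbeats 1000000

namespace UStatAux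

/-- The set of ordered pairs `(i,j)` with `i < j < n`. -/
def pairs (n : ℕ) : Finset (ℕ × ℕ) :=
  (Finset.range n ×ˢ Finset.range n).filter fun q => q.1 < q.2

lemma sum_pairs {R : Type*} [AddCommMonoid R] (n : ℕ) (F : ℕ → ℕ → R) :
    ∑ q ∈ pairs n, F q.1 q.2 = ∑ i ∈ Finset.range n, ∑ j ∈ Finset.Ioo i n, F i j := by
  rw [pairs, Finset.sum_filter, Finset.sum_product]
  refine Finset.sum_congr rfl fun i _ => ?_
  rw [← Finset.sum_filter]
  refine Finset.sum_congr ?_ fun j _ => rfl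
  ext j
  simp [Finset.mem_Ioo, and_comm]

lemma card_pairs_mul_two (n : ℕ) : (pairs n).card * 2 = n * (n - 1) := by
  have : (pairs n).card = ∑ i ∈ Finset.range n, (n - 1 - i) := by
    rw [Finset.card_eq_sum_ones, sum_pairs n fun _ _ => 1]
    refine Finset.sum_congr rfl fun i hi => ?_
    rw [Finset.sum_const, smul_eq_mul, mul_one, Nat.card_Ioo]
    omega
  rw [this, show (∑ i ∈ Finset.range n, (n - 1 - i)) = ∑ i ∈ Finset.range n, i from
    Finset.sum_range_reflect (fun j => j) n]
  exact Finset.sum_range_id_mul_two n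

lemma pairs_mono {m n : ℕ} (hmn : m ≤ n) : pairs m ⊆ pairs n := by
  intro q hq
  simp only [pairs, Finset.mem_filter, Finset.mem_product, Finset.mem_range] at hq ⊢
  omega

lemma mem_pairs {n : ℕ} {q : ℕ × ℕ} (hq : q ∈ pairs n) : q.1 < n ∧ q.2 < n ∧ q.1 < q.2 := by
  simp only [pairs, Finset.mem_filter, Finset.mem_product, Finset.mem_range] at hq
  tauto

lemma card_pairs_pos {n : ℕ} (hn : 2 ≤ n) : 0 < (pairs n).card := by
  refine Finset.card_pos.2 ⟨(0, 1), ?_⟩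
  simp only [pairs, Finset.mem_filter, Finset.mem_product, Finset.mem_range]
  omega

lemma U_diff_bound {Y : ℕ × ℕ → ℝ} {B : ℝ} (hB : 0 ≤ B) (hY : ∀ q, |Y q| ≤ B)
    {m n : ℕ} (h2 : 2 ≤ m) (hmn : m ≤ n) :
    |(∑ q ∈ pairs n, Y q) / ((pairs n).card : ℝ) -
      (∑ q ∈ pairs m, Y q) / ((pairs m).card : ℝ)| ≤
      2 * B * (1 - ((pairs m).card : ℝ) / ((pairs n).card : ℝ)) := by
  have hab : ((pairs m).card : ℝ) ≤ ((pairs n).card : ℝ) := by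
    exact_mod_cast Finset.card_le_card (pairs_mono hmn)
  have ha : (0:ℝ) < ((pairs m).card : ℝ) := by exact_mod_cast card_pairs_pos h2
  have hcsd : ((pairs n \ pairs m).card : ℝ) = ((pairs n).card : ℝ) - ((pairs m).card : ℝ) := by
    rw [Finset.card_sdiff_of_subset (pairs_mono hmn)]
    have : (pairs m).card ≤ (pairs n).card := Finset.card_le_card (pairs_mono hmn)
    push_cast [Nat.cast_sub this]
    ring
  set Sm := ∑ q ∈ pairs m, Y q
  set Sn := ∑ q ∈ pairs n, Y q
  set a : ℝ := ((pairs m).card : ℝ)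
  set b : ℝ := ((pairs n).card : ℝ)
  have hb : 0 < b := lt_of_lt_of_le ha hab
  have hSm : |Sm| ≤ B * a := by
    refine (Finset.abs_sum_le_sum_abs _ _).trans ?_
    calc ∑ q ∈ pairs m, |Y q| ≤ ∑ _q ∈ pairs m, B := Finset.sum_le_sum fun q _ => hY q
      _ = a * B := by rw [Finset.sum_const, nsmul_eq_mul]
      _ = B * a := mul_comm _ _
  have hSdiff : |Sn - Sm| ≤ B * (b - a) := by
    have hsd : Sn - Sm = ∑ q ∈ pairs n \ pairs m, Y q :=
      (Finset.sum_sdiff_eq_sub (pairs_mono hmn)).symm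
    rw [hsd]
    refine (Finset.abs_sum_le_sum_abs _ _).trans ?_
    calc ∑ q ∈ pairs n \ pairs m, |Y q| ≤ ∑ _q ∈ pairs n \ pairs m, B :=
          Finset.sum_le_sum fun q _ => hY q
      _ = ((pairs n \ pairs m).card : ℝ) * B := by rw [Finset.sum_const, nsmul_eq_mul]
      _ = B * (b - a) := by rw [hcsd]; ring
  have key : Sn / b - Sm / a = (Sn - Sm) / b + Sm * (1 / b - 1 / a) := by
    field_simp
    ring
  rw [key]
  refine (abs_add_le _ _).trans ?_
  have h1 : |(Sn - Sm) / b| ≤ B * (b - a) / b := by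
    rw [abs_div, abs_of_pos hb]
    exact div_le_div_of_nonneg_right hSdiff hb.le |>.trans (le_of_eq rfl)
  have h2' : |Sm * (1 / b - 1 / a)| ≤ B * a * (1 / a - 1 / b) := by
    rw [abs_mul]
    have hba : |1 / b - 1 / a| = 1 / a - 1 / b := by
      rw [abs_sub_comm, abs_of_nonneg]
      exact sub_nonneg.2 (one_div_le_one_div_of_le ha hab)
    rw [hba]
    have hnn : 0 ≤ 1 / a - 1 / b := sub_nonneg.2 (one_div_le_one_div_of_le ha hab)
    exact mul_le_mul_of_nonneg_right hSm hnn
  refine (add_le_add h1 h2').trans (le_of_eq ?_)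
  field_simp
  ring

lemma e_bound {n : ℕ} (hn : 16 ≤ n) :
    1 - ((pairs ((Nat.sqrt n)^2)).card : ℝ) / ((pairs n).card : ℝ) ≤ 16 / (Nat.sqrt n : ℝ) := by
  set t := Nat.sqrt n with ht
  have ht2 : 4 ≤ t := by
    rw [ht, Nat.le_sqrt]
    omega
  have hsq_le : t^2 ≤ n := Nat.sqrt_le' n
  have hn_le : n ≤ t^2 + 2*t := by
    have hlt := Nat.lt_succ_sqrt' n
    have hexp : t.succ ^ 2 = t^2 + 2*t + 1 := by rw [Nat.succ_eq_add_one]; ring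
    rw [← ht, hexp] at hlt
    omega
  have h1t : (1:ℕ) ≤ t^2 := by nlinarith
  have hbpos : (0:ℝ) < ((pairs n).card : ℝ) := by
    exact_mod_cast card_pairs_pos (by omega : 2 ≤ n)
  have h2a : 2 * ((pairs (t^2)).card : ℝ) = (t:ℝ)^2 * ((t:ℝ)^2 - 1) := by
    have h := congrArg (Nat.cast (R := ℝ)) (card_pairs_mul_two (t^2))
    push_cast [Nat.cast_sub h1t] at h
    push_cast
    linarith
  have h2b : 2 * ((pairs n).card : ℝ) = (n:ℝ) * ((n:ℝ) - 1) := by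
    have h := congrArg (Nat.cast (R := ℝ)) (card_pairs_mul_two n)
    push_cast [Nat.cast_sub (by omega : 1 ≤ n)] at h
    push_cast
    linarith
  set a : ℝ := ((pairs (t^2)).card : ℝ)
  set b : ℝ := ((pairs n).card : ℝ)
  have hT : (4:ℝ) ≤ (t:ℝ) := by exact_mod_cast ht2
  have hTnn : (0:ℝ) ≤ (t:ℝ) := by linarith
  have hN1 : ((t:ℝ))^2 ≤ (n:ℝ) := by exact_mod_cast hsq_le
  have hN2 : (n:ℝ) ≤ (t:ℝ)^2 + 2*(t:ℝ) := by exact_mod_cast hn_le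
  have hTpos : (0:ℝ) < (t:ℝ) := by linarith
  have hNN : 2*b - 2*a ≤ 4*(t:ℝ)^3 + 4*(t:ℝ)^2 := by nlinarith [hN1, hN2, hT, h2a, h2b]
  have hstep1 : (2*b - 2*a)*(t:ℝ) ≤ (4*(t:ℝ)^3 + 4*(t:ℝ)^2)*(t:ℝ) :=
    mul_le_mul_of_nonneg_right hNN hTnn
  have hstep2 : (t:ℝ)^2*((t:ℝ)^2-1) ≤ 2*b := by
    have haux : (0:ℝ) ≤ (n:ℝ) + (t:ℝ)^2 - 1 := by nlinarith
    nlinarith [mul_nonneg (sub_nonneg.2 hN1) haux]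
  have hstep3 : (4*(t:ℝ)^3 + 4*(t:ℝ)^2)*(t:ℝ) ≤ 16*((t:ℝ)^2*((t:ℝ)^2-1)) := by nlinarith [hT]
  have heq : 1 - a / b = (b - a) / b := by field_simp
  rw [heq, div_le_div_iff₀ hbpos hTpos]
  linarith

lemma card_bad_le (n : ℕ) (p : ℕ × ℕ) :
    ((pairs n).filter fun q => q.1 = p.1 ∨ q.1 = p.2 ∨ q.2 = p.1 ∨ q.2 = p.2).card ≤ 4 * n := by
  classical
  have hsub : ((pairs n).filter fun q => q.1 = p.1 ∨ q.1 = p.2 ∨ q.2 = p.1 ∨ q.2 = p.2) ⊆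
      (({p.1} ×ˢ Finset.range n) ∪ ({p.2} ×ˢ Finset.range n)) ∪
      ((Finset.range n ×ˢ {p.1}) ∪ (Finset.range n ×ˢ {p.2})) := by
    intro q hq
    rw [Finset.mem_filter] at hq
    obtain ⟨hqP, hbad⟩ := hq
    have hm := mem_pairs hqP
    simp only [Finset.mem_union, Finset.mem_product, Finset.mem_singleton, Finset.mem_range]
    rcases hbad with h1|h2|h3|h4
    · exact Or.inl (Or.inl ⟨h1, hm.2.1⟩)
    · exact Or.inl (Or.inr ⟨h2, hm.2.1⟩)
    · exact Or.inr (Or.inl ⟨hm.1, h3⟩)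
    · exact Or.inr (Or.inr ⟨hm.1, h4⟩)
  refine le_trans (Finset.card_le_card hsub) ?_
  refine le_trans (Finset.card_union_le _ _) ?_
  have h1 := Finset.card_union_le (({p.1} : Finset ℕ) ×ˢ Finset.range n)
    (({p.2} : Finset ℕ) ×ˢ Finset.range n)
  have h2 := Finset.card_union_le (Finset.range n ×ˢ ({p.1} : Finset ℕ))
    (Finset.range n ×ˢ ({p.2} : Finset ℕ))
  simp only [Finset.card_product, Finset.card_singleton, Finset.card_range, one_mul, mul_one]
    at h1 h2 ⊢
  omega

lemma card_pairs_le (n : ℕ) : (pairs n).card ≤ n^2 := by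
  refine le_trans (Finset.card_le_card (Finset.filter_subset _ _)) ?_
  rw [Finset.card_product, Finset.card_range, sq]


section Prob

variable {E : Type*} [MeasurableSpace E]
    {Ω : Type*} [MeasurableSpace Ω] {μ : Measure Ω} [IsProbabilityMeasure μ]
    {Z : ℕ → Ω → E} (hZmeas : ∀ i, Measurable (Z i))
    (hindep : iIndepFun Z μ)
    {ν : Measure E} [IsProbabilityMeasure ν]
    (hlaw : ∀ i, Measure.map (Z i) μ = ν)
    {G : E × E → ℝ} (hGmeas : Measurable G)
    {C : ℝ} (hC0 : 0 ≤ C) (hGbdd : ∀ p, |G p| ≤ C)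
    (hGmean : ∫ p, G p ∂(ν.prod ν) = 0)

lemma integrable_bdd {f : Ω → ℝ} (hf : Measurable f) {D : ℝ} (hD : ∀ ω, |f ω| ≤ D) :
    Integrable f μ :=
  ⟨hf.aestronglyMeasurable, HasFiniteIntegral.of_bounded (C := D)
    (ae_of_all _ (by simpa [Real.norm_eq_abs] using hD))⟩

include hZmeas hindep hlaw in
lemma pair_law {i j : ℕ} (hij : i ≠ j) :
    Measure.map (fun ω => (Z i ω, Z j ω)) μ = ν.prod ν := by
  have hI := hindep.indepFun hij
  rw [indepFun_iff_map_prod_eq_prod_map_map (hZmeas i).aemeasurable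
    (hZmeas j).aemeasurable] at hI
  rw [hI, hlaw i, hlaw j]

include hZmeas hindep hlaw hGmeas hGmean in
lemma mean_zero {i j : ℕ} (hij : i ≠ j) :
    ∫ ω, G (Z i ω, Z j ω) ∂μ = 0 := by
  rw [← integral_map ((hZmeas i).aemeasurable.prodMk (hZmeas j).aemeasurable)
    hGmeas.aestronglyMeasurable, pair_law hZmeas hindep hlaw hij, hGmean]

include hZmeas hindep hlaw hGmeas hGmean in
lemma cross_zero {i j k l : ℕ} (hkl : k ≠ l) (hik : i ≠ k) (hil : i ≠ l) (hjk : j ≠ k) (hjl : j ≠ l) :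
    ∫ ω, G (Z i ω, Z j ω) * G (Z k ω, Z l ω) ∂μ = 0 := by
  have hI : IndepFun (fun ω => G (Z i ω, Z j ω)) (fun ω => G (Z k ω, Z l ω)) μ :=
    (hindep.indepFun_prodMk_prodMk hZmeas i j k l hik hil hjk hjl).comp hGmeas hGmeas
  have heq := hI.integral_fun_mul_eq_mul_integral
    (hGmeas.comp ((hZmeas i).prodMk (hZmeas j))).aestronglyMeasurable
    (hGmeas.comp ((hZmeas k).prodMk (hZmeas l))).aestronglyMeasurable
  calc ∫ ω, G (Z i ω, Z j ω) * G (Z k ω, Z l ω) ∂μ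
      = (∫ ω, G (Z i ω, Z j ω) ∂μ) * ∫ ω, G (Z k ω, Z l ω) ∂μ := heq
    _ = 0 := by rw [mean_zero hZmeas hindep hlaw hGmeas hGmean hkl, mul_zero]

include hZmeas hindep hlaw hGmeas hC0 hGbdd hGmean in
lemma variance_bound (n : ℕ) :
    ∫ ω, (∑ q ∈ pairs n, G (Z q.1 ω, Z q.2 ω))^2 ∂μ ≤ 4 * C^2 * n^3 := by
  classical
  set X : ℕ × ℕ → Ω → ℝ := fun q ω => G (Z q.1 ω, Z q.2 ω) with hX
  have hXmeas : ∀ q : ℕ × ℕ, Measurable (X q) :=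
    fun q => hGmeas.comp ((hZmeas q.1).prodMk (hZmeas q.2))
  have hXbdd : ∀ (q : ℕ × ℕ) ω, |X q ω| ≤ C := fun q ω => hGbdd _
  have hprod_int : ∀ p q : ℕ × ℕ, Integrable (fun ω => X p ω * X q ω) μ := fun p q =>
    integrable_bdd ((hXmeas p).mul (hXmeas q)) (D := C^2) (fun ω => by
      rw [abs_mul, sq]
      exact mul_le_mul (hXbdd p ω) (hXbdd q ω) (abs_nonneg _) hC0)
  have hterm : ∀ p q : ℕ × ℕ, ∫ ω, X p ω * X q ω ∂μ ≤ C^2 := by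
    intro p q
    have := norm_integral_le_of_norm_le_const (μ := μ) (f := fun ω => X p ω * X q ω)
      (C := C^2) (ae_of_all _ fun ω => by
        rw [Real.norm_eq_abs, abs_mul, sq]
        exact mul_le_mul (hXbdd p ω) (hXbdd q ω) (abs_nonneg _) hC0)
    simp only [measure_univ, ENNReal.toReal_one, probReal_univ, mul_one, Real.norm_eq_abs] at this
    exact le_trans (le_abs_self _) this
  have hsq : ∀ ω, (∑ q ∈ pairs n, X q ω)^2 = ∑ p ∈ pairs n, ∑ q ∈ pairs n, X p ω * X q ω := by
    intro ω; rw [sq, Finset.sum_mul_sum]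
  calc ∫ ω, (∑ q ∈ pairs n, X q ω)^2 ∂μ
      = ∫ ω, ∑ p ∈ pairs n, ∑ q ∈ pairs n, X p ω * X q ω ∂μ :=
        integral_congr_ae (ae_of_all _ fun ω => hsq ω)
    _ = ∑ p ∈ pairs n, ∫ ω, ∑ q ∈ pairs n, X p ω * X q ω ∂μ :=
        integral_finset_sum _ (fun p _ => integrable_finset_sum _ (fun q _ => hprod_int p q))
    _ = ∑ p ∈ pairs n, ∑ q ∈ pairs n, ∫ ω, X p ω * X q ω ∂μ :=
        Finset.sum_congr rfl (fun p _ => integral_finset_sum _ (fun q _ => hprod_int p q))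
    _ ≤ ∑ p ∈ pairs n, ∑ q ∈ pairs n,
          (if q.1 = p.1 ∨ q.1 = p.2 ∨ q.2 = p.1 ∨ q.2 = p.2 then C^2 else 0) := by
        refine Finset.sum_le_sum fun p hp => Finset.sum_le_sum fun q hq => ?_
        by_cases hbad : q.1 = p.1 ∨ q.1 = p.2 ∨ q.2 = p.1 ∨ q.2 = p.2
        · rw [if_pos hbad]; exact hterm p q
        · rw [if_neg hbad]
          push_neg at hbad
          have hkl : q.1 ≠ q.2 := ne_of_lt (mem_pairs hq).2.2
          have := cross_zero hZmeas hindep hlaw hGmeas hGmean (i := p.1) (j := p.2)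
            (k := q.1) (l := q.2) hkl (fun h => hbad.1 h.symm) (fun h => hbad.2.2.1 h.symm)
            (fun h => hbad.2.1 h.symm) (fun h => hbad.2.2.2 h.symm)
          exact le_of_eq this
    _ ≤ ∑ p ∈ pairs n, (4 * n) * C^2 := by
        refine Finset.sum_le_sum fun p hp => ?_
        rw [← Finset.sum_filter]
        rw [Finset.sum_const, nsmul_eq_mul]
        have hcard := card_bad_le n p
        have hC2 : (0:ℝ) ≤ C^2 := sq_nonneg C
        have : ((((pairs n).filter fun q => q.1 = p.1 ∨ q.1 = p.2 ∨ q.2 = p.1 ∨ q.2 = p.2).card : ℝ))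
            ≤ (4 * n : ℕ) := by exact_mod_cast hcard
        calc _ ≤ ((4 * n : ℕ) : ℝ) * C^2 := mul_le_mul_of_nonneg_right this hC2
          _ = (4 * n) * C^2 := by push_cast; ring
    _ ≤ (n^2 : ℝ) * ((4 * n) * C^2) := by
        rw [Finset.sum_const, nsmul_eq_mul]
        have hcard : ((pairs n).card : ℝ) ≤ (n^2 : ℕ) := by exact_mod_cast card_pairs_le n
        refine mul_le_mul_of_nonneg_right ?_ ?_
        · exact_mod_cast hcard
        · positivity
    _ = 4 * C^2 * n^3 := by push_cast; ring

end Prob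

end UStatAux
open UStatAux

/-- Strong law of large numbers for U-statistics of degree 2: for an i.i.d.
sequence `Z i` with common law `ν` and a bounded measurable symmetric kernel
`h`, the U-statistic `U n = (2/(n(n-1))) Σ_{i<j} h (Z i) (Z j)` converges
almost surely to `θ = ∫∫ h d(ν ⊗ ν)`. -/
theorem U_statistic_strong_law
    {E : Type*} [MeasurableSpace E]
    {Ω : Type*} [MeasurableSpace Ω] (μ : Measure Ω) [IsProbabilityMeasure μ]
    (Z : ℕ → Ω → E)
    (hZmeas : ∀ i, Measurable (Z i))
    (hindep : iIndepFun Z μ)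
    (ν : Measure E) [IsProbabilityMeasure ν]
    (hlaw : ∀ i, Measure.map (Z i) μ = ν)
    (h : E → E → ℝ)
    (hmeas : Measurable fun p : E × E => h p.1 p.2)
    (M : ℝ) (hbdd : ∀ x y, |h x y| ≤ M)
    (hsymm : ∀ x y, h x y = h y x)
    (U : ℕ → Ω → ℝ)
    (hU : ∀ n ω, U n ω =
      (2 / (n * (n - 1) : ℝ)) *
        ∑ i ∈ Finset.range n, ∑ j ∈ Finset.Ioo i n, h (Z i ω) (Z j ω))
    (θ : ℝ)
    (hθ : θ = ∫ p : E × E, h p.1 p.2 ∂(ν.prod ν)) :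
    ∀ᵐ ω ∂μ, Tendsto (fun n => U n ω) atTop (nhds θ) := by
  classical
  -- E is nonempty, so 0 ≤ M
  have hE : Nonempty E := by
    by_contra hc
    rw [not_nonempty_iff] at hc
    have h1 : ν Set.univ = 1 := measure_univ
    rw [Set.univ_eq_empty_iff.mpr hc] at h1
    simp at h1
  obtain ⟨x0⟩ := hE
  have hM0 : 0 ≤ M := le_trans (abs_nonneg _) (hbdd x0 x0)
  -- integrability of the kernel over the product measure
  have hint : Integrable (fun p : E × E => h p.1 p.2) (ν.prod ν) :=
    ⟨hmeas.aestronglyMeasurable, HasFiniteIntegral.of_bounded (C := M)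
      (ae_of_all _ fun p => by simpa [Real.norm_eq_abs] using hbdd p.1 p.2)⟩
  set B : ℝ := 2 * M with hB
  have hB0 : 0 ≤ B := by positivity
  have hθM : |θ| ≤ M := by
    rw [hθ]
    have := norm_integral_le_of_norm_le_const (μ := ν.prod ν)
      (f := fun p : E × E => h p.1 p.2) (C := M)
      (ae_of_all _ fun p => by simpa [Real.norm_eq_abs] using hbdd p.1 p.2)
    simpa [Real.norm_eq_abs, measure_univ] using this
  -- the centered kernel G
  set G : E × E → ℝ := fun p => h p.1 p.2 - θ with hG
  have hGmeas : Measurable G := hmeas.sub measurable_const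
  have hGbdd : ∀ p, |G p| ≤ B := by
    intro p
    have h1 : |h p.1 p.2 - θ| ≤ |h p.1 p.2| + |θ| := abs_sub _ _
    calc |G p| = |h p.1 p.2 - θ| := rfl
      _ ≤ |h p.1 p.2| + |θ| := h1
      _ ≤ M + M := add_le_add (hbdd _ _) hθM
      _ = B := by rw [hB]; ring
  have hGmean : ∫ p, G p ∂(ν.prod ν) = 0 := by
    have : ∫ p, G p ∂(ν.prod ν) = ∫ p : E × E, (h p.1 p.2 - θ) ∂(ν.prod ν) := rfl
    rw [this, integral_sub hint (integrable_const θ), integral_const]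
    simp [measure_univ, hθ]
  -- the centered sum over pairs
  set Sg : ℕ → Ω → ℝ := fun n ω => ∑ q ∈ pairs n, G (Z q.1 ω, Z q.2 ω) with hSg
  have hcard : ∀ n : ℕ, 2 ≤ n → 2 * ((pairs n).card : ℝ) = (n:ℝ) * ((n:ℝ) - 1) := by
    intro n hn
    have hcmt := congrArg (Nat.cast (R := ℝ)) (card_pairs_mul_two n)
    push_cast [Nat.cast_sub (by omega : 1 ≤ n)] at hcmt
    linarith
  -- representation of U for n ≥ 2
  have hUrep : ∀ n : ℕ, 2 ≤ n → ∀ ω, U n ω = θ + Sg n ω / ((pairs n).card : ℝ) := by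
    intro n hn ω
    have hc2 := hcard n hn
    have hcpos : (0:ℝ) < ((pairs n).card : ℝ) := by exact_mod_cast card_pairs_pos hn
    rw [hU n ω, ← sum_pairs n (fun i j => h (Z i ω) (Z j ω))]
    have hsplit : ∑ q ∈ pairs n, h (Z q.1 ω) (Z q.2 ω)
        = Sg n ω + ((pairs n).card : ℝ) * θ := by
      rw [hSg]
      calc ∑ q ∈ pairs n, h (Z q.1 ω) (Z q.2 ω)
          = ∑ q ∈ pairs n, (G (Z q.1 ω, Z q.2 ω) + θ) :=
            Finset.sum_congr rfl fun q _ => by rw [hG]; ring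
        _ = (∑ q ∈ pairs n, G (Z q.1 ω, Z q.2 ω)) + ∑ _q ∈ pairs n, θ :=
            Finset.sum_add_distrib
        _ = (fun n ω => ∑ q ∈ pairs n, G (Z q.1 ω, Z q.2 ω)) n ω
              + ((pairs n).card : ℝ) * θ := by
            rw [Finset.sum_const, nsmul_eq_mul]
    rw [hsplit]
    have hnn : (n:ℝ) * ((n:ℝ) - 1) = 2 * ((pairs n).card : ℝ) := hc2.symm
    rw [hnn]
    rw [div_mul_eq_div_div, div_self two_ne_zero, one_div, inv_mul_eq_div, add_div,
      mul_div_cancel_left₀ θ hcpos.ne']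
    ring
  -- boundedness of Sg and of U - θ
  have hSgbdd : ∀ (n : ℕ) ω, |Sg n ω| ≤ B * ((pairs n).card : ℝ) := by
    intro n ω
    rw [hSg]
    refine (Finset.abs_sum_le_sum_abs _ _).trans ?_
    calc ∑ q ∈ pairs n, |G (Z q.1 ω, Z q.2 ω)| ≤ ∑ _q ∈ pairs n, B :=
          Finset.sum_le_sum fun q _ => hGbdd _
      _ = ((pairs n).card : ℝ) * B := by rw [Finset.sum_const, nsmul_eq_mul]
      _ = B * ((pairs n).card : ℝ) := mul_comm _ _
  have hUbd : ∀ n : ℕ, 2 ≤ n → ∀ ω, |U n ω - θ| ≤ B := by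
    intro n hn ω
    have hcpos : (0:ℝ) < ((pairs n).card : ℝ) := by exact_mod_cast card_pairs_pos hn
    rw [hUrep n hn ω]
    have heq : θ + Sg n ω / ((pairs n).card : ℝ) - θ = Sg n ω / ((pairs n).card : ℝ) := by
      ring
    rw [heq, abs_div, abs_of_pos hcpos, div_le_iff₀ hcpos]
    calc |Sg n ω| ≤ B * ((pairs n).card : ℝ) := hSgbdd n ω
      _ = B * ((pairs n).card : ℝ) := rfl
  -- the variance bound
  have hvar : ∀ n : ℕ, ∫ ω, (Sg n ω)^2 ∂μ ≤ 4 * B^2 * n^3 := fun n =>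
    variance_bound hZmeas hindep hlaw hGmeas hB0 hGbdd hGmean n
  -- the subsequence of squares
  set φ : ℕ → ℕ := fun k => (k+2)^2 with hφ
  have hφ4 : ∀ k, 4 ≤ φ k := by
    intro k
    rw [hφ]
    nlinarith [Nat.zero_le k]
  -- L² bound along the subsequence
  have hVbdd : ∀ k : ℕ, ∫ ω, (U (φ k) ω - θ)^2 ∂μ ≤ (64 * B^2) / ((k:ℝ)+1)^2 := by
    intro k
    set m := φ k with hm
    have hm4 : 4 ≤ m := hφ4 k
    have hm2 : 2 ≤ m := by omega
    have hcpos : (0:ℝ) < ((pairs m).card : ℝ) := by exact_mod_cast card_pairs_pos hm2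
    have hc2 : 2 * ((pairs m).card : ℝ) = (m:ℝ) * ((m:ℝ) - 1) := hcard m hm2
    set c : ℝ := ((pairs m).card : ℝ) with hcdef
    have hmR : (4:ℝ) ≤ (m:ℝ) := by exact_mod_cast hm4
    have hpt : ∀ ω, (U m ω - θ)^2 = (Sg m ω)^2 * (1/c^2) := by
      intro ω
      rw [hUrep m hm2 ω]
      rw [← hcdef]
      ring
    rw [integral_congr_ae (ae_of_all _ hpt), integral_mul_const]
    have step1 : (∫ ω, (Sg m ω)^2 ∂μ) * (1/c^2) ≤ (4*B^2*(m:ℝ)^3) * (1/c^2) :=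
      mul_le_mul_of_nonneg_right (hvar m) (by positivity)
    refine step1.trans ?_
    have step2 : (4*B^2*(m:ℝ)^3) * (1/c^2) ≤ (64*B^2) / (m:ℝ) := by
      rw [mul_one_div, div_le_div_iff₀ (by positivity) (by linarith)]
      have hkey : 4*(m:ℝ)^3*(m:ℝ) ≤ 16*((m:ℝ)*((m:ℝ)-1))^2 := by nlinarith
      have h64 : 64 * c^2 = 16*((m:ℝ)*((m:ℝ)-1))^2 := by
        have hcc : ((m:ℝ)*((m:ℝ)-1))^2 = (2*c)^2 := by rw [hc2]
        rw [hcc]; ring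
      nlinarith [mul_le_mul_of_nonneg_left hkey (sq_nonneg B)]
    refine step2.trans ?_
    have hmge : ((k:ℝ)+1)^2 ≤ (m:ℝ) := by
      have hnatge : (k+1)^2 ≤ m := by
        rw [hm, hφ]
        exact Nat.pow_le_pow_left (by omega) 2
      calc ((k:ℝ)+1)^2 = (((k+1)^2 : ℕ) : ℝ) := by push_cast; ring
        _ ≤ (m:ℝ) := by exact_mod_cast hnatge
    apply div_le_div_of_nonneg_left (by positivity) (by positivity) hmge
  -- measurability of U
  have hUmeas : ∀ n, Measurable (U n) := by
    intro n
    have hrw : U n = fun ω => (2 / (n * (n - 1) : ℝ)) *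
        ∑ i ∈ Finset.range n, ∑ j ∈ Finset.Ioo i n, h (Z i ω) (Z j ω) := funext (hU n)
    rw [hrw]
    exact measurable_const.mul (Finset.measurable_sum _ fun i _ =>
      Finset.measurable_sum _ fun j _ => hmeas.comp ((hZmeas i).prodMk (hZmeas j)))
  -- the squared deviations along the subsequence
  set W : ℕ → Ω → ℝ := fun k ω => (U (φ k) ω - θ)^2 with hW
  have hWmeas : ∀ k, Measurable (W k) := fun k =>
    ((hUmeas (φ k)).sub measurable_const).pow measurable_const
  have hWnn : ∀ k ω, 0 ≤ W k ω := fun k ω => sq_nonneg _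
  have hWint : ∀ k, Integrable (W k) μ := by
    intro k
    refine integrable_bdd (hWmeas k) (D := B^2) fun ω => ?_
    have h1 : |U (φ k) ω - θ| ≤ B := hUbd (φ k) (by have := hφ4 k; omega) ω
    show |(U (φ k) ω - θ)^2| ≤ B^2
    rw [abs_of_nonneg (sq_nonneg _), ← sq_abs (U (φ k) ω - θ)]
    exact pow_le_pow_left₀ (abs_nonneg _) h1 2
  have hlint : ∀ k, ∫⁻ ω, ENNReal.ofReal (W k ω) ∂μ = ENNReal.ofReal (∫ ω, W k ω ∂μ) :=
    fun k => (ofReal_integral_eq_lintegral_ofReal (hWint k) (ae_of_all _ (hWnn k))).symm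
  -- summability
  have hsummable : Summable (fun k : ℕ => (64*B^2) / ((k:ℝ)+1)^2) := by
    have base : Summable (fun k : ℕ => 1/((k:ℝ))^2) :=
      Real.summable_one_div_nat_pow.mpr one_lt_two
    have sh : Summable (fun k : ℕ => 1/((((k+1):ℕ)):ℝ)^2) := (summable_nat_add_iff 1).2 base
    have sh2 : Summable (fun k : ℕ => (64*B^2) * (1/((k:ℝ)+1)^2)) := by
      refine Summable.mul_left _ (sh.congr fun k => ?_)
      push_cast
      ring
    exact sh2.congr fun k => by rw [mul_one_div]
  have hsum_fin : ∑' k, ∫⁻ ω, ENNReal.ofReal (W k ω) ∂μ ≠ ⊤ := by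
    have hle : ∑' k, ∫⁻ ω, ENNReal.ofReal (W k ω) ∂μ
        ≤ ∑' (k : ℕ), ENNReal.ofReal ((64*B^2)/((k:ℝ)+1)^2) := by
      refine ENNReal.tsum_le_tsum fun k => ?_
      rw [hlint k]
      exact ENNReal.ofReal_le_ofReal (hVbdd k)
    have heq : ∑' (k : ℕ), ENNReal.ofReal ((64*B^2)/((k:ℝ)+1)^2)
        = ENNReal.ofReal (∑' (k : ℕ), (64*B^2)/((k:ℝ)+1)^2) :=
      (ENNReal.ofReal_tsum_of_nonneg (fun k => by positivity) hsummable).symm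
    exact ((hle.trans_eq heq).trans_lt ENNReal.ofReal_lt_top).ne
  have hae : ∀ᵐ ω ∂μ, ∑' k, ENNReal.ofReal (W k ω) ≠ ⊤ := by
    have hmeas' : ∀ k, AEMeasurable (fun ω => ENNReal.ofReal (W k ω)) μ := fun k =>
      ((hWmeas k).ennreal_ofReal).aemeasurable
    have hswap := lintegral_tsum hmeas'
    have hfin : ∫⁻ ω, ∑' k, ENNReal.ofReal (W k ω) ∂μ ≠ ⊤ := by
      rw [hswap]; exact hsum_fin
    have hmeas'' : Measurable fun ω => ∑' k, ENNReal.ofReal (W k ω) :=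
      Measurable.ennreal_tsum fun k => (hWmeas k).ennreal_ofReal
    exact (ae_lt_top hmeas'' hfin).mono fun ω hω => hω.ne
  -- sqrt tends to infinity
  have hsqrt : Tendsto (fun n : ℕ => Nat.sqrt n) atTop atTop :=
    tendsto_atTop_atTop.2 fun b => ⟨b*b, fun n hn => Nat.le_sqrt.2 hn⟩
  -- main argument, pointwise a.e.
  filter_upwards [hae] with ω hω
  have htend0 : Tendsto (fun k => ENNReal.ofReal (W k ω)) atTop (nhds 0) :=
    ENNReal.tendsto_atTop_zero_of_tsum_ne_top hω
  have htendW : Tendsto (fun k => W k ω) atTop (nhds 0) := by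
    have h1 : Tendsto (fun k => (ENNReal.ofReal (W k ω)).toReal) atTop
        (nhds (0:ENNReal).toReal) := (ENNReal.tendsto_toReal (by simp)).comp htend0
    have heq2 : (fun k => (ENNReal.ofReal (W k ω)).toReal) = fun k => W k ω :=
      funext fun k => ENNReal.toReal_ofReal (hWnn k ω)
    rw [heq2] at h1
    simpa using h1
  have htendUφ : Tendsto (fun k => U (φ k) ω) atTop (nhds θ) := by
    have habs : Tendsto (fun k => |U (φ k) ω - θ|) atTop (nhds 0) := by
      have hsqrtc : Tendsto (fun k => Real.sqrt (W k ω)) atTop (nhds (Real.sqrt 0)) :=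
        (Real.continuous_sqrt.tendsto 0).comp htendW
      simp only [Real.sqrt_zero] at hsqrtc
      exact hsqrtc.congr fun k => Real.sqrt_sq_eq_abs _
    rw [tendsto_iff_dist_tendsto_zero]
    simpa [Real.dist_eq] using habs
  have htendsq : Tendsto (fun k => U (k^2) ω) atTop (nhds θ) :=
    (tendsto_add_atTop_iff_nat (f := fun k => U (k^2) ω) 2).mp htendUφ
  -- gap filling
  rw [tendsto_iff_dist_tendsto_zero]
  simp only [Real.dist_eq]
  have habs2 : Tendsto (fun k => |U (k^2) ω - θ|) atTop (nhds 0) := by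
    have := (htendsq.sub (tendsto_const_nhds (x := θ))).abs
    simpa using this
  refine squeeze_zero' (Eventually.of_forall fun n => abs_nonneg _)
    (g := fun n => |U ((Nat.sqrt n)^2) ω - θ| + (2*B*16) / (Nat.sqrt n : ℝ)) ?_ ?_
  · filter_upwards [eventually_ge_atTop 16] with n hn
    set t := Nat.sqrt n with htdef
    set s := t^2 with hsdef
    have ht4 : 4 ≤ t := by rw [htdef, Nat.le_sqrt]; omega
    have hsn : s ≤ n := Nat.sqrt_le' n
    have hs2 : 2 ≤ s := by
      calc 2 ≤ 4*4 := by norm_num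
        _ ≤ t*t := Nat.mul_le_mul ht4 ht4
        _ = t^2 := (pow_two t).symm
        _ = s := hsdef.symm
    have hn2 : 2 ≤ n := by omega
    have hkey : |U n ω - U s ω| ≤
        2*B*(1 - ((pairs s).card : ℝ) / ((pairs n).card : ℝ)) := by
      have h1 := hUrep n hn2 ω
      have h2 := hUrep s hs2 ω
      have hdiff : U n ω - U s ω
          = Sg n ω / ((pairs n).card : ℝ) - Sg s ω / ((pairs s).card : ℝ) := by
        rw [h1, h2]; ring
      rw [hdiff]
      exact U_diff_bound hB0 (fun q => hGbdd _) hs2 hsn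
    have he := e_bound (n := n) hn
    have hstep : 2*B*(1 - ((pairs s).card : ℝ) / ((pairs n).card : ℝ))
        ≤ (2*B*16) / (t : ℝ) := by
      calc 2*B*(1 - ((pairs s).card : ℝ) / ((pairs n).card : ℝ))
          ≤ 2*B*(16 / (t:ℝ)) := mul_le_mul_of_nonneg_left he (by positivity)
        _ = (2*B*16) / (t:ℝ) := by ring
    calc |U n ω - θ| ≤ |U n ω - U s ω| + |U s ω - θ| := abs_sub_le _ _ _
      _ ≤ (2*B*16) / (t : ℝ) + |U s ω - θ| := add_le_add (hkey.trans hstep) le_rfl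
      _ = |U ((Nat.sqrt n)^2) ω - θ| + (2*B*16) / ((Nat.sqrt n : ℕ) : ℝ) := by
          rw [← htdef, ← hsdef]; ring
  · have hterm1 : Tendsto (fun n => |U ((Nat.sqrt n)^2) ω - θ|) atTop (nhds 0) :=
      habs2.comp hsqrt
    have hterm2 : Tendsto (fun n : ℕ => (2*B*16) / ((Nat.sqrt n : ℕ) : ℝ)) atTop (nhds 0) :=
      (tendsto_const_div_atTop_nhds_zero_nat (2*B*16)).comp hsqrt
    simpa using hterm1.add hterm2
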